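/- Let a = (π_1 p_1, …, π_K p_K)ᵀ, p = (p_1, …, p_K)ᵀ, A = diag(a), P̄ = diag(1-p_1, …, 1-p_K), s_k = p_k ∑_{ℓ≠k} π_ℓ (1-p_ℓ), s = (s_1,…,s_K)ᵀ, σ = ∑_{k=1}^K π_k (1-p_k). Define the (K+1)×(K+1) matrix R with upper-left K×K block P̄A + P̄ + p aᵀ, upper-right column s, lower-left row aᵀ and lower-right entry σ, and the (K+1)×K matrix U whose first K rows are P̄A + P̄ + p aᵀ and whose last row is aᵀ. Let d ∈ ℝ^K have nonnegative entries with d_{k*} > 0 for at least one index k*. Then: (i) every entry of R is strictly positive; (ii) every row of R sums to 1; and (iii) for any initial vector Λ̄_0 ∈ ℝ^{K+1}, the recursion Λ̄_i = R Λ̄_{i-1} + U d satisfies: there exists a constant γ > 0 such that every coordinate of (1/i) Λ̄_i converges to γ as i → ∞; in particular every coordinate of Λ̄_i tends to +∞. -/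

import Mathlib

open Finset Filter Matrix

section StochHelpers

variable {ι : Type*} [Fintype ι] [Nonempty ι] [DecidableEq ι]

private lemma mulVec_upper (R : Matrix ι ι ℝ) (hs : ∀ i, ∑ j, R i j = 1)
    {ε : ℝ} (hε : 0 ≤ ε) (hεR : ∀ i j, ε ≤ R i j) (x : ι → ℝ) (i : ι) :
    R.mulVec x i ≤ ε * univ.inf' univ_nonempty x + (1 - ε) * univ.sup' univ_nonempty x := by
  obtain ⟨j0, -, hj0⟩ := Finset.exists_mem_eq_inf' (univ_nonempty) x
  have hRnn : ∀ j, (0:ℝ) ≤ R i j := fun j => hε.trans (hεR i j)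
  have hsup : ∀ j, x j ≤ univ.sup' univ_nonempty x := fun j => Finset.le_sup' _ (mem_univ j)
  have hmv : R.mulVec x i = ∑ j, R i j * x j := by
    simp [Matrix.mulVec, dotProduct]
  have hsplit : ∑ j, R i j * x j
      = R i j0 * x j0 + ∑ j ∈ univ.erase j0, R i j * x j :=
    (Finset.add_sum_erase univ _ (mem_univ j0)).symm
  have h3 : ∑ j ∈ univ.erase j0, R i j = 1 - R i j0 := by
    have h := Finset.add_sum_erase univ (fun j => R i j) (mem_univ j0)
    rw [hs i] at h; linarith
  have h1 : R i j0 * x j0 ≤ ε * x j0 + (R i j0 - ε) * univ.sup' univ_nonempty x := by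
    nlinarith [hεR i j0, hsup j0]
  have h2 : ∑ j ∈ univ.erase j0, R i j * x j
      ≤ (1 - R i j0) * univ.sup' univ_nonempty x := by
    calc ∑ j ∈ univ.erase j0, R i j * x j
        ≤ ∑ j ∈ univ.erase j0, R i j * univ.sup' univ_nonempty x :=
          Finset.sum_le_sum fun j _ => mul_le_mul_of_nonneg_left (hsup j) (hRnn j)
      _ = (1 - R i j0) * univ.sup' univ_nonempty x := by rw [← Finset.sum_mul, h3]
  rw [hmv, hsplit, hj0]
  linarith

private lemma mulVec_lower (R : Matrix ι ι ℝ) (hs : ∀ i, ∑ j, R i j = 1)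
    {ε : ℝ} (hε : 0 ≤ ε) (hεR : ∀ i j, ε ≤ R i j) (x : ι → ℝ) (i : ι) :
    ε * univ.sup' univ_nonempty x + (1 - ε) * univ.inf' univ_nonempty x ≤ R.mulVec x i := by
  obtain ⟨j0, -, hj0⟩ := Finset.exists_mem_eq_sup' (univ_nonempty) x
  have hRnn : ∀ j, (0:ℝ) ≤ R i j := fun j => hε.trans (hεR i j)
  have hinf : ∀ j, univ.inf' univ_nonempty x ≤ x j := fun j => Finset.inf'_le _ (mem_univ j)
  have hmv : R.mulVec x i = ∑ j, R i j * x j := by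
    simp [Matrix.mulVec, dotProduct]
  have hsplit : ∑ j, R i j * x j
      = R i j0 * x j0 + ∑ j ∈ univ.erase j0, R i j * x j :=
    (Finset.add_sum_erase univ _ (mem_univ j0)).symm
  have h3 : ∑ j ∈ univ.erase j0, R i j = 1 - R i j0 := by
    have h := Finset.add_sum_erase univ (fun j => R i j) (mem_univ j0)
    rw [hs i] at h; linarith
  have h1 : ε * x j0 + (R i j0 - ε) * univ.inf' univ_nonempty x ≤ R i j0 * x j0 := by
    nlinarith [hεR i j0, hinf j0]
  have h2 : (1 - R i j0) * univ.inf' univ_nonempty x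
      ≤ ∑ j ∈ univ.erase j0, R i j * x j := by
    calc (1 - R i j0) * univ.inf' univ_nonempty x
        = ∑ j ∈ univ.erase j0, R i j * univ.inf' univ_nonempty x := by rw [← Finset.sum_mul, h3]
      _ ≤ ∑ j ∈ univ.erase j0, R i j * x j :=
          Finset.sum_le_sum fun j _ => mul_le_mul_of_nonneg_left (hinf j) (hRnn j)
  rw [hmv, hsplit, hj0]
  linarith

private lemma vinf_le_vsup (x : ι → ℝ) :
    univ.inf' (univ_nonempty (α := ι)) x ≤ univ.sup' univ_nonempty x :=
  (Finset.inf'_le _ (mem_univ (Classical.arbitrary ι))).trans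
    (Finset.le_sup' _ (mem_univ (Classical.arbitrary ι)))

private lemma vinf_mono (R : Matrix ι ι ℝ) (hs : ∀ i, ∑ j, R i j = 1)
    {ε : ℝ} (hε : 0 ≤ ε) (hεR : ∀ i j, ε ≤ R i j) (x : ι → ℝ) :
    univ.inf' (univ_nonempty (α := ι)) x ≤ univ.inf' univ_nonempty (R.mulVec x) := by
  apply Finset.le_inf'
  intro i _
  have h := mulVec_lower R hs hε hεR x i
  nlinarith [vinf_le_vsup x]

private lemma vsup_anti (R : Matrix ι ι ℝ) (hs : ∀ i, ∑ j, R i j = 1)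
    {ε : ℝ} (hε : 0 ≤ ε) (hεR : ∀ i j, ε ≤ R i j) (x : ι → ℝ) :
    univ.sup' (univ_nonempty (α := ι)) (R.mulVec x) ≤ univ.sup' univ_nonempty x := by
  apply Finset.sup'_le
  intro i _
  have h := mulVec_upper R hs hε hεR x i
  nlinarith [vinf_le_vsup x]

private lemma osc_contract (R : Matrix ι ι ℝ) (hs : ∀ i, ∑ j, R i j = 1)
    {ε : ℝ} (hε : 0 ≤ ε) (hεR : ∀ i j, ε ≤ R i j) (x : ι → ℝ) :
    univ.sup' (univ_nonempty (α := ι)) (R.mulVec x) - univ.inf' univ_nonempty (R.mulVec x)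
      ≤ (1 - 2 * ε) * (univ.sup' univ_nonempty x - univ.inf' univ_nonempty x) := by
  have hu : univ.sup' (univ_nonempty (α := ι)) (R.mulVec x)
      ≤ ε * univ.inf' univ_nonempty x + (1 - ε) * univ.sup' univ_nonempty x :=
    Finset.sup'_le _ _ fun i _ => mulVec_upper R hs hε hεR x i
  have hl : ε * univ.sup' (univ_nonempty (α := ι)) x + (1 - ε) * univ.inf' univ_nonempty x
      ≤ univ.inf' univ_nonempty (R.mulVec x) :=
    Finset.le_inf' _ _ fun i _ => mulVec_lower R hs hε hεR x i
  nlinarith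

end StochHelpers

/-- **Pre-intervention dynamics of the expected log-belief ratios in the symmetric
asynchronous protocol.**  Agents are indexed by `Fin (n+1)` (so `K = n + 1 ≥ 2`), and the
extended index set `Fin (n+2)` lists the `K` agents (via `Fin.castSucc`) followed by the
fusion center (`Fin.last`).  With `a = (π_k p_k)_k`, `s_k = p_k ∑_{ℓ≠k} π_ℓ(1-p_ℓ)`,
`σ = ∑_k π_k (1-p_k)`, the matrix `R` has upper-left block `P̄A + P̄ + p aᵀ`, upper-right
column `s`, lower-left row `aᵀ` and lower-right entry `σ`, and `U` consists of the first
`K` rows `P̄A + P̄ + p aᵀ` and last row `aᵀ`.  If `d ≥ 0` has a strictly positive entry,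
then: (i) every entry of `R` is strictly positive; (ii) every row of `R` sums to `1`;
(iii) for every solution of `Λ_i = R Λ_{i-1} + U d` there is a constant `γ > 0` such that
every coordinate of `(1/i) Λ_i` tends to `γ`; in particular every coordinate of `Λ_i`
tends to `+∞`. -/
theorem symmetric_preintervention_recursion
    {n : ℕ} (hn : 1 ≤ n)
    (π p : Fin (n + 1) → ℝ)
    (hπ : ∀ k, π k ∈ Set.Ioo (0 : ℝ) 1) (hπsum : ∑ k, π k = 1)
    (hp : ∀ k, p k ∈ Set.Ioo (0 : ℝ) 1)
    (d : Fin (n + 1) → ℝ) (hd : ∀ k, 0 ≤ d k) (hd' : ∃ k, 0 < d k)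
    (R : Matrix (Fin (n + 2)) (Fin (n + 2)) ℝ)
    (U : Matrix (Fin (n + 2)) (Fin (n + 1)) ℝ)
    (hR11 : ∀ j k : Fin (n + 1), R j.castSucc k.castSucc =
      (if j = k then (1 - p j) * (π j * p j) + (1 - p j) else 0) + p j * (π k * p k))
    (hR12 : ∀ j : Fin (n + 1), R j.castSucc (Fin.last (n + 1)) =
      p j * ∑ l ∈ univ.erase j, π l * (1 - p l))
    (hR21 : ∀ k : Fin (n + 1), R (Fin.last (n + 1)) k.castSucc = π k * p k)
    (hR22 : R (Fin.last (n + 1)) (Fin.last (n + 1)) = ∑ k, π k * (1 - p k))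
    (hU1 : ∀ j k : Fin (n + 1), U j.castSucc k =
      (if j = k then (1 - p j) * (π j * p j) + (1 - p j) else 0) + p j * (π k * p k))
    (hU2 : ∀ k : Fin (n + 1), U (Fin.last (n + 1)) k = π k * p k) :
    (∀ i j, 0 < R i j) ∧
    (∀ i, ∑ j, R i j = 1) ∧
    (∀ Λ : ℕ → Fin (n + 2) → ℝ,
      (∀ i : ℕ, Λ (i + 1) = R.mulVec (Λ i) + U.mulVec d) →
      ∃ γ : ℝ, 0 < γ ∧
        (∀ j, Tendsto (fun i : ℕ => Λ i j / (i : ℝ)) atTop (nhds γ)) ∧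
        (∀ j, Tendsto (fun i : ℕ => Λ i j) atTop atTop)) := by
  have hπ0 : ∀ k, 0 < π k := fun k => (hπ k).1
  have hπ1 : ∀ k, π k < 1 := fun k => (hπ k).2
  have hp0 : ∀ k, 0 < p k := fun k => (hp k).1
  have hp1 : ∀ k, p k < 1 := fun k => (hp k).2
  -- nontriviality of the agent index set
  have hne : ∀ j : Fin (n + 1), ∃ l : Fin (n + 1), l ≠ j := by
    have : Nontrivial (Fin (n + 1)) := Fin.nontrivial_iff_two_le.mpr (by omega)
    exact fun j => exists_ne j
  -- (i) positivity of R
  have hRpos : ∀ i j, 0 < R i j := by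
    intro i j
    induction i using Fin.lastCases with
    | last =>
      induction j using Fin.lastCases with
      | last =>
        rw [hR22]
        apply Finset.sum_pos (fun k _ => by nlinarith [hπ0 k, hp1 k]) univ_nonempty
      | cast k =>
        rw [hR21]; exact mul_pos (hπ0 k) (hp0 k)
    | cast j' =>
      induction j using Fin.lastCases with
      | last =>
        rw [hR12]
        apply mul_pos (hp0 j')
        obtain ⟨l, hl⟩ := hne j'
        apply Finset.sum_pos (fun k hk => by nlinarith [hπ0 k, hp1 k])
        exact ⟨l, Finset.mem_erase.mpr ⟨hl, mem_univ l⟩⟩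
      | cast k =>
        rw [hR11]
        have h2 : 0 < p j' * (π k * p k) := mul_pos (hp0 j') (mul_pos (hπ0 k) (hp0 k))
        have h1 : (0:ℝ) ≤ if j' = k then (1 - p j') * (π j' * p j') + (1 - p j') else 0 := by
          split
          · nlinarith [mul_pos (hπ0 j') (hp0 j'), hp1 j']
          · exact le_refl 0
        linarith
  -- (ii) row sums
  have hπp1 : ∑ l, π l * (1 - p l) = 1 - ∑ l, π l * p l := by
    have : ∑ l, π l * (1 - p l) = ∑ l, (π l - π l * p l) := by
      apply Finset.sum_congr rfl; intro l _; ring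
    rw [this, Finset.sum_sub_distrib, hπsum]
  have hrow : ∀ i, ∑ j, R i j = 1 := by
    intro i
    induction i using Fin.lastCases with
    | last =>
      rw [Fin.sum_univ_castSucc]
      simp only [hR21, hR22]
      rw [hπp1]; ring
    | cast j =>
      rw [Fin.sum_univ_castSucc]
      simp only [hR11, hR12]
      rw [Finset.sum_add_distrib, Finset.sum_ite_eq univ j
        (fun _ => (1 - p j) * (π j * p j) + (1 - p j))]
      rw [Finset.sum_erase_eq_sub (mem_univ j), hπp1]
      have : ∑ k, p j * (π k * p k) = p j * ∑ k, π k * p k := by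
        rw [Finset.mul_sum]
      rw [this]
      simp only [mem_univ, if_pos]
      ring
  refine ⟨hRpos, hrow, ?_⟩
  -- (iii) asymptotics
  intro Λ hΛ
  set c : Fin (n + 2) → ℝ := U.mulVec d with hc
  -- positivity of U and c
  have hUpos : ∀ j k, 0 < U j k := by
    intro j k
    induction j using Fin.lastCases with
    | last => rw [hU2]; exact mul_pos (hπ0 k) (hp0 k)
    | cast j' =>
      rw [hU1]
      have h2 : 0 < p j' * (π k * p k) := mul_pos (hp0 j') (mul_pos (hπ0 k) (hp0 k))
      have h1 : (0:ℝ) ≤ if j' = k then (1 - p j') * (π j' * p j') + (1 - p j') else 0 := by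
        split
        · nlinarith [mul_pos (hπ0 j') (hp0 j'), hp1 j']
        · exact le_refl 0
      linarith
  have hcpos : ∀ j, 0 < c j := by
    intro j
    have : c j = ∑ k, U j k * d k := by simp [hc, Matrix.mulVec, dotProduct]
    rw [this]
    obtain ⟨k0, hk0⟩ := hd'
    exact Finset.sum_pos' (fun k _ => mul_nonneg (hUpos j k).le (hd k))
      ⟨k0, mem_univ k0, mul_pos (hUpos j k0) hk0⟩
  -- uniform lower bound ε of entries of R
  obtain ⟨q, -, hq⟩ := Finset.exists_min_image (univ : Finset (Fin (n+2) × Fin (n+2)))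
    (fun q => R q.1 q.2) ⟨(0,0), mem_univ _⟩
  set ε : ℝ := R q.1 q.2 with hεdef
  have hε0 : 0 < ε := hRpos q.1 q.2
  have hεle : ∀ i j, ε ≤ R i j := fun i j => hq (i, j) (mem_univ _)
  have h01 : (0 : Fin (n+2)) ≠ 1 := by
    simp [Fin.ext_iff]
  have hεhalf : 2 * ε ≤ 1 := by
    have hmem : (1 : Fin (n+2)) ∈ (univ : Finset (Fin (n+2))).erase 0 :=
      Finset.mem_erase.mpr ⟨Ne.symm h01, mem_univ _⟩
    have hsum1 : R q.1 0 + R q.1 1 ≤ ∑ j, R q.1 j := by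
      rw [← Finset.add_sum_erase univ _ (mem_univ (0 : Fin (n+2)))]
      have := Finset.single_le_sum (f := fun j => R q.1 j)
        (fun j _ => (hRpos q.1 j).le) hmem
      linarith
    rw [hrow q.1] at hsum1
    have := hεle q.1 0
    have := hεle q.1 1
    linarith
  have hr0 : (0:ℝ) ≤ 1 - 2 * ε := by linarith
  have hr1 : 1 - 2 * ε < 1 := by linarith
  -- the increment sequence δ i = R^i c
  set δ : ℕ → Fin (n + 2) → ℝ := fun i => (fun v => R.mulVec v)^[i] c with hδdef
  have hδ0 : δ 0 = c := rfl
  have hδs : ∀ i, δ (i + 1) = R.mulVec (δ i) := fun i =>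
    Function.iterate_succ_apply' _ _ _
  set m : ℕ → ℝ := fun i => univ.inf' univ_nonempty (δ i) with hmdef
  set M : ℕ → ℝ := fun i => univ.sup' univ_nonempty (δ i) with hMdef
  have hm_mono : Monotone m := by
    apply monotone_nat_of_le_succ
    intro i
    have := vinf_mono R hrow hε0.le hεle (δ i)
    rw [← hδs i] at this
    exact this
  have hM_anti : Antitone M := by
    apply antitone_nat_of_succ_le
    intro i
    have := vsup_anti R hrow hε0.le hεle (δ i)
    rw [← hδs i] at this
    exact this
  have hmM : ∀ i, m i ≤ M i := fun i => vinf_le_vsup (δ i)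
  have hosc : ∀ i, M i - m i ≤ (1 - 2*ε)^i * (M 0 - m 0) := by
    intro i
    induction i with
    | zero => simp
    | succ i ih =>
      have hstep : M (i+1) - m (i+1) ≤ (1 - 2*ε) * (M i - m i) := by
        have := osc_contract R hrow hε0.le hεle (δ i)
        rw [← hδs i] at this
        exact this
      calc M (i+1) - m (i+1) ≤ (1 - 2*ε) * (M i - m i) := hstep
        _ ≤ (1 - 2*ε) * ((1 - 2*ε)^i * (M 0 - m 0)) :=
            mul_le_mul_of_nonneg_left ih hr0
        _ = (1 - 2*ε)^(i+1) * (M 0 - m 0) := by ring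
  have hbdd : BddAbove (Set.range m) := by
    refine ⟨M 0, ?_⟩
    rintro _ ⟨i, rfl⟩
    exact (hmM i).trans (hM_anti (Nat.zero_le i))
  set γ : ℝ := ⨆ i, m i with hγdef
  have hγ : Tendsto m atTop (nhds γ) := tendsto_atTop_ciSup hm_mono hbdd
  have hγ0 : 0 < γ := by
    have h0 : m 0 ≤ γ := le_ciSup hbdd 0
    have : 0 < m 0 := by
      obtain ⟨j0, -, hj0⟩ := Finset.exists_mem_eq_inf'
        (univ_nonempty (α := Fin (n+2))) (δ 0)
      rw [hmdef]
      simp only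
      rw [hj0, hδ0]
      exact hcpos j0
    linarith
  have hoscto : Tendsto (fun i => M i - m i) atTop (nhds 0) := by
    have hgeo : Tendsto (fun i : ℕ => (1 - 2*ε)^i * (M 0 - m 0)) atTop (nhds 0) := by
      have := (tendsto_pow_atTop_nhds_zero_of_lt_one hr0 hr1).mul_const (M 0 - m 0)
      simpa using this
    exact tendsto_of_tendsto_of_tendsto_of_le_of_le tendsto_const_nhds hgeo
      (fun i => by linarith [hmM i]) hosc
  have hM : Tendsto M atTop (nhds γ) := by
    have := hγ.add hoscto
    simpa using this
  have hδto : ∀ j, Tendsto (fun i => δ i j) atTop (nhds γ) := fun j =>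
    tendsto_of_tendsto_of_tendsto_of_le_of_le hγ hM
      (fun i => Finset.inf'_le _ (mem_univ j)) (fun i => Finset.le_sup' _ (mem_univ j))
  -- decomposition Λ = Λ⁰ + e
  set Λ₀ : ℕ → Fin (n + 2) → ℝ := fun i j => ∑ t ∈ Finset.range i, δ t j with hΛ₀def
  set e : ℕ → Fin (n + 2) → ℝ := fun i j => Λ i j - Λ₀ i j with hedef
  have hmulsum : ∀ (i : ℕ) (j : Fin (n+2)),
      R.mulVec (Λ₀ i) j = ∑ t ∈ Finset.range i, δ (t+1) j := by
    intro i j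
    have : R.mulVec (Λ₀ i) j = ∑ k, R j k * ∑ t ∈ Finset.range i, δ t k := by
      simp [Matrix.mulVec, dotProduct, hΛ₀def]
    rw [this]
    have : ∑ k, R j k * ∑ t ∈ Finset.range i, δ t k
        = ∑ k, ∑ t ∈ Finset.range i, R j k * δ t k := by
      apply Finset.sum_congr rfl; intro k _; rw [Finset.mul_sum]
    rw [this, Finset.sum_comm]
    apply Finset.sum_congr rfl
    intro t _
    rw [hδs t]
    simp [Matrix.mulVec, dotProduct]
  have he : ∀ i, e (i+1) = R.mulVec (e i) := by
    intro i
    funext j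
    have h1 : R.mulVec (e i) j = R.mulVec (Λ i) j - R.mulVec (Λ₀ i) j := by
      have : e i = (fun k => Λ i k - Λ₀ i k) := rfl
      rw [this]
      simp [Matrix.mulVec, dotProduct, mul_sub, Finset.sum_sub_distrib]
    rw [hedef]
    simp only
    rw [h1, hmulsum]
    have h2 : Λ (i+1) j = R.mulVec (Λ i) j + c j := by rw [hΛ i]; rfl
    have h3 : Λ₀ (i+1) j = ∑ t ∈ Finset.range i, δ (t+1) j + δ 0 j := by
      rw [hΛ₀def]
      simp only
      rw [Finset.sum_range_succ']
    rw [h2, h3, hδ0]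
    ring
  -- e is bounded
  have hebnd : ∀ i, univ.inf' (univ_nonempty (α := Fin (n+2))) (e 0) ≤
      univ.inf' univ_nonempty (e i) ∧
      univ.sup' (univ_nonempty (α := Fin (n+2))) (e i) ≤ univ.sup' univ_nonempty (e 0) := by
    intro i
    induction i with
    | zero => exact ⟨le_refl _, le_refl _⟩
    | succ i ih =>
      constructor
      · refine ih.1.trans ?_
        have := vinf_mono R hrow hε0.le hεle (e i)
        rw [← he i] at this
        exact this
      · refine (?_ : univ.sup' univ_nonempty (e (i+1)) ≤ univ.sup' univ_nonempty (e i)).trans ih.2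
        have := vsup_anti R hrow hε0.le hεle (e i)
        rw [← he i] at this
        exact this
  have hecoord : ∀ i j, univ.inf' (univ_nonempty (α := Fin (n+2))) (e 0) ≤ e i j ∧
      e i j ≤ univ.sup' univ_nonempty (e 0) := by
    intro i j
    exact ⟨(hebnd i).1.trans (Finset.inf'_le _ (mem_univ j)),
      (Finset.le_sup' _ (mem_univ j)).trans (hebnd i).2⟩
  -- e i j / i → 0
  have heto : ∀ j, Tendsto (fun i : ℕ => e i j / (i : ℝ)) atTop (nhds 0) := by
    intro j
    apply tendsto_of_tendsto_of_tendsto_of_le_of_le'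
      (tendsto_const_div_atTop_nhds_zero_nat (univ.inf' univ_nonempty (e 0)))
      (tendsto_const_div_atTop_nhds_zero_nat (univ.sup' univ_nonempty (e 0)))
    · filter_upwards [eventually_ge_atTop 1] with i hi
      have hipos : (0:ℝ) < (i:ℝ) := by exact_mod_cast hi
      exact div_le_div_of_nonneg_right (hecoord i j).1 hipos.le
    · filter_upwards [eventually_ge_atTop 1] with i hi
      have hipos : (0:ℝ) < (i:ℝ) := by exact_mod_cast hi
      exact div_le_div_of_nonneg_right (hecoord i j).2 hipos.le
  -- Λ₀ i j / i → γ by Cesàro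
  have hΛ₀to : ∀ j, Tendsto (fun i : ℕ => Λ₀ i j / (i : ℝ)) atTop (nhds γ) := by
    intro j
    have := (hδto j).cesaro
    have heq : (fun i : ℕ => Λ₀ i j / (i : ℝ))
        = fun i : ℕ => ((i:ℝ))⁻¹ * ∑ t ∈ Finset.range i, δ t j := by
      funext i
      rw [hΛ₀def]
      simp only
      rw [div_eq_inv_mul]
    rw [heq]
    exact this
  have hΛto : ∀ j, Tendsto (fun i : ℕ => Λ i j / (i : ℝ)) atTop (nhds γ) := by
    intro j
    have heq : (fun i : ℕ => Λ i j / (i : ℝ))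
        = fun i : ℕ => Λ₀ i j / (i : ℝ) + e i j / (i : ℝ) := by
      funext i
      rw [← add_div]
      congr 1
      rw [hedef]
      ring
    rw [heq]
    have := (hΛ₀to j).add (heto j)
    simpa using this
  refine ⟨γ, hγ0, hΛto, ?_⟩
  intro j
  have hev : ∀ᶠ i : ℕ in atTop, (γ/2) * (i:ℝ) ≤ Λ i j := by
    filter_upwards [(hΛto j).eventually (eventually_ge_nhds (by linarith : γ/2 < γ)),
      eventually_ge_atTop 1] with i hi hi1
    have hipos : (0:ℝ) < (i:ℝ) := by exact_mod_cast hi1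
    calc (γ/2) * (i:ℝ) ≤ (Λ i j / (i:ℝ)) * (i:ℝ) :=
        mul_le_mul_of_nonneg_right hi hipos.le
      _ = Λ i j := by field_simp
  exact tendsto_atTop_mono' _ hev
    (Tendsto.const_mul_atTop (by linarith : (0:ℝ) < γ/2) tendsto_natCast_atTop_atTop)
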